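/- The class of Ext-algebras satisfying a fixed set E of profinite equations u = v (u, v in the completion of WM(A)) is a pseudo-variety: it is closed under sub-Ext-algebras, quotients, and finite direct products; conversely, every pseudo-variety of finite Ext-algebras is defined by the set of all equations it satisfies (Reiterman's theorem for Ext-algebras). -/

import Mathlib

inductive VPKind : Type
  | call | ret | intern
deriving DecidableEq

class VPAlphabet (A : Type) where
  kind : A → VPKind

variable {A : Type} [VPAlphabet A]

inductive WellMatched : List A → Prop
  | nil : WellMatched []
  | intern (c : A) (hc : VPAlphabet.kind c = VPKind.intern) : WellMatched [c]
  | ext (a b : A) (w : List A) (ha : VPAlphabet.kind a = VPKind.call)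
      (hb : VPAlphabet.kind b = VPKind.ret) (hw : WellMatched w) :
      WellMatched (a :: w ++ [b])
  | append (u v : List A) (hu : WellMatched u) (hv : WellMatched v) : WellMatched (u ++ v)

theorem wm_insert {u v x : List A} (h : WellMatched (u ++ v)) (hx : WellMatched x) :
    WellMatched (u ++ x ++ v) := by
  suffices H : ∀ w, WellMatched w → ∀ u' v' : List A, w = u' ++ v' →
      WellMatched (u' ++ x ++ v') from H _ h u v rfl
  intro w hw
  induction hw with
  | nil =>
    intro u' v' huv
    obtain ⟨rfl, rfl⟩ := List.append_eq_nil_iff.mp huv.symm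
    simpa using hx
  | intern c hc =>
    intro u' v' huv
    rcases u' with _ | ⟨a, u''⟩
    · simp only [List.nil_append] at huv
      subst huv
      simpa using WellMatched.append x [c] hx (WellMatched.intern c hc)
    · have h1 : c = a := by injection huv
      have h2 : ([] : List A) = u'' ++ v' := by injection huv
      obtain ⟨rfl, rfl⟩ := List.append_eq_nil_iff.mp h2.symm
      subst h1
      simpa using WellMatched.append [c] x (WellMatched.intern c hc) hx
  | ext a b w' ha hb hw' ih =>
    intro u' v' huv
    rcases u' with _ | ⟨a'', u''⟩
    · simp only [List.nil_append] at huv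
      subst huv
      simpa using WellMatched.append x _ hx (WellMatched.ext a b w' ha hb hw')
    · have h1 : a = a'' := by injection huv
      have huv2 : w' ++ [b] = u'' ++ v' := by injection huv
      subst h1
      rcases List.eq_nil_or_concat v' with rfl | ⟨v'', b'', rfl⟩
      · have h3 : u'' = w' ++ [b] := by simpa using huv2.symm
        subst h3
        simpa using WellMatched.append _ x (WellMatched.ext a b w' ha hb hw') hx
      · have h4 : w' = u'' ++ v'' ∧ [b] = [b''] :=
          List.append_inj' (by simpa [List.append_assoc] using huv2) rfl
        obtain ⟨rfl, hb'⟩ := h4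
        have hbb : b = b'' := by injection hb'
        subst hbb
        have := WellMatched.ext a b _ ha hb (ih u'' v'' rfl)
        simpa [List.append_assoc] using this
  | append w₁ w₂ h₁ h₂ ih₁ ih₂ =>
    intro u' v' huv
    rcases List.append_eq_append_iff.mp huv with ⟨a', rfl, rfl⟩ | ⟨c', rfl, rfl⟩
    · have := WellMatched.append _ _ h₁ (ih₂ a' v' rfl)
      simpa [List.append_assoc] using this
    · have := WellMatched.append _ _ (ih₁ u' c' rfl) h₂
      simpa [List.append_assoc] using this

def WM (A : Type) [VPAlphabet A] : Type := {w : List A // WellMatched w}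

instance : Monoid (WM A) where
  one := ⟨[], WellMatched.nil⟩
  mul u v := ⟨u.1 ++ v.1, WellMatched.append _ _ u.2 v.2⟩
  mul_assoc a b c := Subtype.ext (List.append_assoc _ _ _)
  one_mul a := Subtype.ext (List.nil_append _)
  mul_one a := Subtype.ext (List.append_nil _)

@[simp] theorem WM.mul_val (x y : WM A) : (x * y).1 = x.1 ++ y.1 := rfl
@[simp] theorem WM.one_val : (1 : WM A).1 = [] := rfl

instance : Nonempty (WM A) := ⟨1⟩

def extWord (u v : List A) (h : WellMatched (u ++ v)) (x : WM A) : WM A :=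
  ⟨u ++ x.1 ++ v, wm_insert h x.2⟩

@[simp] theorem extWord_val (u v : List A) (h : WellMatched (u ++ v)) (x : WM A) :
    (extWord u v h x).1 = u ++ x.1 ++ v := rfl

structure ExtAlgebra (R : Type*) [Monoid R] where
  O : Submonoid (Function.End R)
  mulLeft_mem : ∀ r : R, (fun x => r * x) ∈ O
  mulRight_mem : ∀ r : R, (fun x => x * r) ∈ O

structure ExtAlgHom {R S : Type*} [Monoid R] [Monoid S]
    (ER : ExtAlgebra R) (ES : ExtAlgebra S) where
  toMonoidHom : R →* S
  opMap : ER.O →* ES.O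
  compat : ∀ (e : ER.O) (r : R),
    (opMap e : Function.End S) (toMonoidHom r) = toMonoidHom ((e : Function.End R) r)

/-- A morphism of `Ext`-algebras from the free `Ext`-algebra of well-matched words
into an `Ext`-algebra `R`, given by its monoid part and by the images of the
operations `ext_{u,v}`. -/
structure ExtHomWM (A : Type) [VPAlphabet A] {R : Type*} [Monoid R] (ER : ExtAlgebra R) where
  toMonoidHom : WM A →* R
  op : ∀ u v : List A, WellMatched (u ++ v) → ER.O
  op_one : op [] [] WellMatched.nil = 1
  op_comp : ∀ u v (h : WellMatched (u ++ v)) u' v' (h' : WellMatched (u' ++ v'))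
      (h'' : WellMatched ((u ++ u') ++ (v' ++ v))),
      op (u ++ u') (v' ++ v) h'' = op u v h * op u' v' h'
  op_spec : ∀ u v (h : WellMatched (u ++ v)) (x : WM A),
      (op u v h : Function.End R) (toMonoidHom x) = toMonoidHom (extWord u v h x)

/-- `R` recognises `L` via the morphism `φ` when `L` is the preimage of its image. -/
def Recognises {R : Type*} [Monoid R] {ER : ExtAlgebra R}
    (φ : ExtHomWM A ER) (L : Set (WM A)) : Prop :=
  L = φ.toMonoidHom ⁻¹' (φ.toMonoidHom '' L)

/-- The free `Ext`-algebra structure on the monoid of well-matched words. -/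
def freeExt (A : Type) [VPAlphabet A] : ExtAlgebra (WM A) where
  O :=
    { carrier := {e | ∃ u v, ∃ h : WellMatched (u ++ v), ∀ x : WM A, e x = extWord u v h x}
      one_mem' := ⟨[], [], WellMatched.nil, fun x => Subtype.ext (by show x.1 = [] ++ x.1 ++ []; simp)⟩
      mul_mem' := by
        rintro e f ⟨u, v, h, he⟩ ⟨u', v', h', hf⟩
        have h'' : WellMatched ((u ++ u') ++ (v' ++ v)) := by
          simpa [List.append_assoc] using wm_insert h h'
        exact ⟨u ++ u', v' ++ v, h'', fun x => by
          rw [show (e * f) x = e (f x) from rfl, hf, he]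
          exact Subtype.ext (by simp [List.append_assoc])⟩ }
  mulLeft_mem r := ⟨r.1, [], by simpa using r.2, fun x => Subtype.ext (by simp)⟩
  mulRight_mem r := ⟨[], r.1, by simpa using r.2, fun x => Subtype.ext (by simp)⟩

/-- A sub-`Ext`-algebra of an `Ext`-algebra. -/
structure SubExt {S : Type*} [Monoid S] (ES : ExtAlgebra S) where
  carrier : Submonoid S
  ops : Submonoid (Function.End S)
  ops_le : ops ≤ ES.O
  maps_to : ∀ e ∈ ops, ∀ x ∈ carrier, e x ∈ carrier
  mulLeft_mem : ∀ r ∈ carrier, (fun x => r * x) ∈ ops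
  mulRight_mem : ∀ r ∈ carrier, (fun x => x * r) ∈ ops

/-- The `Ext`-algebra structure induced on a sub-`Ext`-algebra. -/
def SubExt.toExtAlgebra {S : Type*} [Monoid S] {ES : ExtAlgebra S} (T : SubExt ES) :
    ExtAlgebra T.carrier where
  O :=
    { carrier := {e : Function.End T.carrier | ∃ f ∈ T.ops, ∀ x : T.carrier, (e x : S) = f x}
      one_mem' := ⟨1, T.ops.one_mem, fun _ => rfl⟩
      mul_mem' := by
        rintro e e' ⟨f, hf, he⟩ ⟨f', hf', he'⟩
        exact ⟨f * f', mul_mem hf hf', fun x => by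
          rw [show (e * e') x = e (e' x) from rfl, show (f * f') (x : S) = f (f' x) from rfl,
            ← he', he]⟩ }
  mulLeft_mem r := ⟨fun x => (r : S) * x, T.mulLeft_mem r r.2, fun _ => rfl⟩
  mulRight_mem r := ⟨fun x => x * (r : S), T.mulRight_mem r r.2, fun _ => rfl⟩

/-- `ER` is a quotient of `ES` if there is a surjective morphism of `Ext`-algebras
from `ES` onto `ER`. -/
def IsQuotientOf {R S : Type*} [Monoid R] [Monoid S]
    (ER : ExtAlgebra R) (ES : ExtAlgebra S) : Prop :=
  ∃ h : ExtAlgHom ES ER, Function.Surjective h.toMonoidHom ∧ Function.Surjective h.opMap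

/-- Bundled finite `Ext`-algebras. -/
structure BExt : Type 1 where
  carrier : Type
  [mon : Monoid carrier]
  [fin : Finite carrier]
  ext : ExtAlgebra carrier

attribute [instance] BExt.mon BExt.fin

section ListTake

variable {B : Type*}

theorem take_take_append (N k : ℕ) (hk : k ≤ N) (x v : List B) :
    ((x.take N) ++ v).take k = (x ++ v).take k := by
  rw [List.take_append, List.take_append, List.take_take,
    List.length_take]
  rw [min_eq_left hk]
  congr 2
  omega

theorem take_mid (N : ℕ) (u s v : List B) :
    (u ++ s.take N ++ v).take N = (u ++ s ++ v).take N := by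
  conv_lhs => rw [List.append_assoc, List.take_append]
  conv_rhs => rw [List.append_assoc, List.take_append]
  congr 1
  exact take_take_append N _ (Nat.sub_le _ _) s v

theorem take_append_right (N : ℕ) (u s : List B) :
    (u ++ s.take N).take N = (u ++ s).take N := by
  have := take_mid N u s ([] : List B)
  simpa using this

end ListTake

/-- The monoid of words of length at most `N`, with truncated concatenation. -/
def TruncM (B : Type) (N : ℕ) : Type := {l : List B // l.length ≤ N}

instance {B : Type} {N : ℕ} : Monoid (TruncM B N) where
  one := ⟨[], by simp⟩
  mul u v := ⟨(u.1 ++ v.1).take N, by rw [List.length_take]; exact min_le_left _ _⟩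
  mul_assoc a b c := Subtype.ext (by
    show ((a.1 ++ b.1).take N ++ c.1).take N = (a.1 ++ (b.1 ++ c.1).take N).take N
    rw [take_take_append N N le_rfl, take_append_right, List.append_assoc])
  one_mul a := Subtype.ext (by
    show (([] : List B) ++ a.1).take N = a.1
    rw [List.nil_append]
    exact List.take_of_length_le a.2)
  mul_one a := Subtype.ext (by
    show (a.1 ++ ([] : List B)).take N = a.1
    rw [List.append_nil]
    exact List.take_of_length_le a.2)

@[simp] theorem TruncM.one_val {B : Type} {N : ℕ} : (1 : TruncM B N).1 = [] := rfl
@[simp] theorem TruncM.mul_val {B : Type} {N : ℕ} (u v : TruncM B N) :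
    (u * v).1 = (u.1 ++ v.1).take N := rfl

instance {B : Type} [Finite B] {N : ℕ} : Finite (TruncM B N) := by
  haveI : Finite (Option B) := Finite.of_equiv (B ⊕ (PUnit : Type)) (Equiv.optionEquivSumPUnit B).symm
  refine Finite.of_injective
    (fun l : TruncM B N => fun i : Fin (N + 1) => l.1[(i : ℕ)]?) ?_
  intro a b hab
  apply Subtype.ext
  apply List.ext_getElem?
  intro i
  by_cases hi : i < N + 1
  · exact congrFun hab ⟨i, hi⟩
  · have ha := a.2
    have hb := b.2
    rw [List.getElem?_eq_none (by omega), List.getElem?_eq_none (by omega)]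

/-- Truncation is a monoid morphism on well-matched words. -/
def truncMonoidHom (A : Type) [VPAlphabet A] (N : ℕ) : WM A →* TruncM A N where
  toFun w := ⟨w.1.take N, by rw [List.length_take]; exact min_le_left _ _⟩
  map_one' := Subtype.ext (by simp)
  map_mul' u v := Subtype.ext (by
    show (u.1 ++ v.1).take N = (u.1.take N ++ v.1.take N).take N
    rw [take_take_append N N le_rfl, take_append_right])

/-- The truncation monoid as an `Ext`-algebra with all functions as operations. -/
def truncExt (A : Type) [VPAlphabet A] (N : ℕ) : ExtAlgebra (TruncM A N) where
  O := ⊤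
  mulLeft_mem _ := trivial
  mulRight_mem _ := trivial

def truncOp {A : Type} [VPAlphabet A] {N : ℕ} (u v : List A) : Function.End (TruncM A N) :=
  fun m => ⟨(u ++ m.1 ++ v).take N, by rw [List.length_take]; exact min_le_left _ _⟩

/-- The truncation morphism of `Ext`-algebras. -/
def truncExtHom (A : Type) [VPAlphabet A] (N : ℕ) : ExtHomWM A (truncExt A N) where
  toMonoidHom := truncMonoidHom A N
  op u v _ := ⟨truncOp u v, trivial⟩
  op_one := by
    apply Subtype.ext
    funext m
    apply Subtype.ext
    show (([] : List A) ++ m.1 ++ []).take N = m.1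
    simpa using List.take_of_length_le m.2
  op_comp u v h u' v' h' h'' := by
    apply Subtype.ext
    funext m
    apply Subtype.ext
    show ((u ++ u') ++ m.1 ++ (v' ++ v)).take N = (u ++ ((u' ++ m.1 ++ v').take N) ++ v).take N
    rw [take_mid]
    simp [List.append_assoc]
  op_spec u v h x := by
    apply Subtype.ext
    show (u ++ (x.1.take N) ++ v).take N = (u ++ x.1 ++ v).take N
    exact take_mid N u x.1 v

/-- `x` and `y` can be separated by a finite `Ext`-algebra of cardinality at most `n`. -/
def SepBound (n : ℕ) (x y : WM A) : Prop :=
  ∃ (R : BExt) (φ : ExtHomWM A R.ext),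
    Nat.card R.carrier ≤ n ∧ φ.toMonoidHom x ≠ φ.toMonoidHom y

/-- The minimal cardinality of a finite `Ext`-algebra separating `x` and `y`. -/
noncomputable def sepDeg (x y : WM A) : ℕ := sInf {n | SepBound n x y}

/-- The profinite (ultra)metric on well-matched words. -/
noncomputable def pdist (x y : WM A) : ℝ :=
  open scoped Classical in if x = y then 0 else (2 : ℝ)⁻¹ ^ sepDeg x y

theorem pdist_nonneg (x y : WM A) : 0 ≤ pdist x y := by
  unfold pdist
  split
  · exact le_rfl
  · positivity

theorem sepBound_comm {n : ℕ} {x y : WM A} : SepBound n x y ↔ SepBound n y x := by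
  constructor <;> rintro ⟨R, φ, h1, h2⟩ <;> exact ⟨R, φ, h1, h2.symm⟩

theorem pdist_comm (x y : WM A) : pdist x y = pdist y x := by
  have h1 : sepDeg x y = sepDeg y x := by
    unfold sepDeg
    congr 1
    ext n
    exact sepBound_comm
  rcases eq_or_ne x y with rfl | h
  · rfl
  · unfold pdist
    rw [if_neg h, if_neg (Ne.symm h), h1]

theorem exists_sepBound [Finite A] {x y : WM A} (hxy : x ≠ y) : ∃ n, SepBound n x y := by
  classical
  set N := max x.1.length y.1.length with hN
  refine ⟨Nat.card (TruncM A N),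
    { carrier := TruncM A N, ext := truncExt A N }, truncExtHom A N, le_rfl, ?_⟩
  intro hcontra
  have hv : x.1.take N = y.1.take N := congrArg Subtype.val hcontra
  rw [List.take_of_length_le (le_max_left _ _ : x.1.length ≤ N),
    List.take_of_length_le (le_max_right _ _ : y.1.length ≤ N)] at hv
  exact hxy (Subtype.ext hv)

theorem pdist_ultra [Finite A] (x y z : WM A) :
    pdist x z ≤ max (pdist x y) (pdist y z) := by
  rcases eq_or_ne x z with rfl | hxz
  · calc pdist x x = 0 := by simp [pdist]
      _ ≤ _ := le_max_of_le_left (pdist_nonneg _ _)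
  rcases eq_or_ne x y with rfl | hxy
  · exact le_max_of_le_right le_rfl
  rcases eq_or_ne y z with rfl | hyz
  · exact le_max_of_le_left le_rfl
  have hSne : {n | SepBound n x z}.Nonempty := exists_sepBound hxz
  obtain ⟨R, φ, hcard, hne⟩ := Nat.sInf_mem hSne
  by_cases hxy' : φ.toMonoidHom x = φ.toMonoidHom y
  · have hb : SepBound (sepDeg x z) y z := ⟨R, φ, hcard, by rw [← hxy']; exact hne⟩
    have hle : sepDeg y z ≤ sepDeg x z := Nat.sInf_le hb
    calc pdist x z = (2 : ℝ)⁻¹ ^ sepDeg x z := by rw [pdist, if_neg hxz]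
      _ ≤ (2 : ℝ)⁻¹ ^ sepDeg y z := pow_le_pow_of_le_one (by norm_num) (by norm_num) hle
      _ = pdist y z := by rw [pdist, if_neg hyz]
      _ ≤ _ := le_max_right _ _
  · have hb : SepBound (sepDeg x z) x y := ⟨R, φ, hcard, hxy'⟩
    have hle : sepDeg x y ≤ sepDeg x z := Nat.sInf_le hb
    calc pdist x z = (2 : ℝ)⁻¹ ^ sepDeg x z := by rw [pdist, if_neg hxz]
      _ ≤ (2 : ℝ)⁻¹ ^ sepDeg x y := pow_le_pow_of_le_one (by norm_num) (by norm_num) hle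
      _ = pdist x y := by rw [pdist, if_neg hxy]
      _ ≤ _ := le_max_left _ _

noncomputable instance WM.metricSpace [Finite A] : MetricSpace (WM A) where
  dist := pdist
  dist_self x := by simp [pdist]
  dist_comm := pdist_comm
  dist_triangle x y z := by
    refine (pdist_ultra x y z).trans (max_le ?_ ?_)
    · exact le_add_of_nonneg_right (pdist_nonneg _ _)
    · exact le_add_of_nonneg_left (pdist_nonneg _ _)
  eq_of_dist_eq_zero := by
    intro x y h
    by_contra hxy
    have h' : pdist x y = 0 := h
    rw [pdist, if_neg hxy] at h'
    exact absurd h' (ne_of_gt (pow_pos (by norm_num) _))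

/-! ### Direct products of Ext-algebras -/

def prodGens {R S : Type*} [Monoid R] [Monoid S] (ER : ExtAlgebra R) (ES : ExtAlgebra S) :
    Set (Function.End (R × S)) :=
  {e | ∃ f ∈ ER.O, ∀ p : R × S, e p = (f p.1, p.2)} ∪
    {e | ∃ g ∈ ES.O, ∀ p : R × S, e p = (p.1, g p.2)}

def prodExt {R S : Type*} [Monoid R] [Monoid S] (ER : ExtAlgebra R) (ES : ExtAlgebra S) :
    ExtAlgebra (R × S) where
  O := Submonoid.closure (prodGens ER ES)
  mulLeft_mem := by
    intro r
    let f : Function.End (R × S) := fun p => (r.1 * p.1, p.2)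
    let g : Function.End (R × S) := fun p => (p.1, r.2 * p.2)
    have h1 : f ∈ Submonoid.closure (prodGens ER ES) :=
      Submonoid.subset_closure
        (Or.inl ⟨fun x => r.1 * x, ER.mulLeft_mem r.1, fun p => rfl⟩)
    have h2 : g ∈ Submonoid.closure (prodGens ER ES) :=
      Submonoid.subset_closure
        (Or.inr ⟨fun x => r.2 * x, ES.mulLeft_mem r.2, fun p => rfl⟩)
    have he : ((fun p => r * p) : Function.End (R × S)) = f * g := by
      funext p
      rfl
    rw [he]
    exact mul_mem h1 h2
  mulRight_mem := by
    intro r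
    let f : Function.End (R × S) := fun p => (p.1 * r.1, p.2)
    let g : Function.End (R × S) := fun p => (p.1, p.2 * r.2)
    have h1 : f ∈ Submonoid.closure (prodGens ER ES) :=
      Submonoid.subset_closure
        (Or.inl ⟨fun x => x * r.1, ER.mulRight_mem r.1, fun p => rfl⟩)
    have h2 : g ∈ Submonoid.closure (prodGens ER ES) :=
      Submonoid.subset_closure
        (Or.inr ⟨fun x => x * r.2, ES.mulRight_mem r.2, fun p => rfl⟩)
    have he : ((fun p => p * r) : Function.End (R × S)) = f * g := by
      funext p
      rfl
    rw [he]
    exact mul_mem h1 h2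

/-! ### Pseudo-varieties -/

/-- The trivial `Ext`-algebra. -/
def punitExt : ExtAlgebra PUnit where
  O := ⊤
  mulLeft_mem _ := trivial
  mulRight_mem _ := trivial

/-- A pseudo-variety of finite `Ext`-algebras. -/
structure AlgVariety where
  mem : BExt → Prop
  punit_mem : mem { carrier := PUnit, ext := punitExt }
  quot_closed : ∀ R S : BExt, mem S → IsQuotientOf R.ext S.ext → mem R
  sub_closed : ∀ (S : BExt) (T : SubExt S.ext),
    mem S → mem { carrier := T.carrier, ext := T.toExtAlgebra }
  prod_closed : ∀ R S : BExt,
    mem R → mem S → mem { carrier := R.carrier × S.carrier, ext := prodExt R.ext S.ext }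


open UniformSpace in
/-- A family of profinite equations, one set for each visibly pushdown alphabet. -/
structure EqSet : Type 1 where
  eqs : ∀ (B : Type) [VPAlphabet B] [Finite B],
    Set (Completion (WM B) × Completion (WM B))

open UniformSpace in
/-- A finite `Ext`-algebra satisfies an equation `u = v` when every continuous
extension of every morphism from `WM(B)` identifies `u` and `v`. -/
def SatisfiesEqs (R : BExt) (E : EqSet) : Prop :=
  ∀ (B : Type) [VPAlphabet B] [Finite B], ∀ p ∈ E.eqs B,
    ∀ (φ : ExtHomWM B R.ext) (ψ : Completion (WM B) → R.carrier),
      (@Continuous _ _ _ ⊥ ψ ∧ ∀ x : WM B, ψ ↑x = φ.toMonoidHom x) →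
      ψ p.1 = ψ p.2


section Machine

variable {R : Type*} [Monoid R] (ER : ExtAlgebra R) (r : A → R) (e : A → A → ER.O)

/-- One step of the stack machine evaluating a word. -/
def mkStep (s : List (A × R) × R) (c : A) : List (A × R) × R :=
  if VPAlphabet.kind c = VPKind.intern then (s.1, s.2 * r c)
  else if VPAlphabet.kind c = VPKind.call then ((c, s.2) :: s.1, 1)
  else
    match s.1 with
    | [] => s
    | (a, t) :: P => (P, t * (e a c : Function.End R) s.2)

def mkRun (w : List A) (s : List (A × R) × R) : List (A × R) × R :=
  List.foldl (mkStep ER r e) s w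

@[simp] lemma mkRun_nil (s) : mkRun ER r e [] s = s := rfl

lemma mkRun_append (w₁ w₂ : List A) (s) :
    mkRun ER r e (w₁ ++ w₂) s = mkRun ER r e w₂ (mkRun ER r e w₁ s) :=
  List.foldl_append

lemma mkRun_cons (c : A) (w : List A) (s) :
    mkRun ER r e (c :: w) s = mkRun ER r e w (mkStep ER r e s c) := rfl

lemma mkStep_intern {c : A} (hc : VPAlphabet.kind c = VPKind.intern) (s) :
    mkStep ER r e s c = (s.1, s.2 * r c) := by
  simp [mkStep, hc]

lemma mkStep_call {c : A} (hc : VPAlphabet.kind c = VPKind.call) (s) :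
    mkStep ER r e s c = ((c, s.2) :: s.1, 1) := by
  simp [mkStep, hc]

lemma mkStep_ret {c a : A} (hc : VPAlphabet.kind c = VPKind.ret) (P : List (A × R)) (t u : R) :
    mkStep ER r e ((a, t) :: P, u) c = (P, t * (e a c : Function.End R) u) := by
  simp [mkStep, hc]

lemma mkRun_wm_aux : ∀ {w : List A}, WellMatched w →
    ∃ m : R, ∀ (P : List (A × R)) (t : R), mkRun ER r e w (P, t) = (P, t * m) := by
  intro w hw
  induction hw with
  | nil => exact ⟨1, fun P t => by simp⟩
  | intern c hc =>
    refine ⟨r c, fun P t => ?_⟩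
    simp [mkRun_cons, mkStep_intern ER r e hc]
  | ext a b w ha hb hw ih =>
    obtain ⟨m, hm⟩ := ih
    refine ⟨(e a b : Function.End R) (1 * m), fun P t => ?_⟩
    rw [mkRun_append, mkRun_cons ER r e a w, mkStep_call ER r e ha, hm,
      mkRun_cons ER r e b [], mkStep_ret ER r e hb, mkRun_nil]
  | append u v hu hv ihu ihv =>
    obtain ⟨mu, hmu⟩ := ihu
    obtain ⟨mv, hmv⟩ := ihv
    exact ⟨mu * mv, fun P t => by rw [mkRun_append, hmu, hmv, mul_assoc]⟩

lemma mkRun_wm {w : List A} (hw : WellMatched w) (P : List (A × R)) (t : R) :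
    mkRun ER r e w (P, t) = (P, t * (mkRun ER r e w ([], 1)).2) := by
  obtain ⟨m, hm⟩ := mkRun_wm_aux ER r e hw
  rw [hm, hm]
  simp

/-- The monoid morphism `WM A →* R` induced by the data `r`, `e`. -/
def mkM : WM A →* R where
  toFun x := (mkRun ER r e x.1 ([], 1)).2
  map_one' := rfl
  map_mul' x y := by
    show (mkRun ER r e (x.1 ++ y.1) ([], 1)).2 = _
    rw [mkRun_append, mkRun_wm ER r e x.2, mkRun_wm ER r e y.2, mkRun_wm ER r e y.2]

lemma mkM_apply (x : WM A) : mkM ER r e x = (mkRun ER r e x.1 ([], 1)).2 := rfl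

lemma mkStar : ∀ {w : List A}, WellMatched w → ∀ u v : List A, w = u ++ v →
    ∃ F : Function.End R, F ∈ ER.O ∧ ∀ (P₀ : List (A × R)) (t₀ z : R),
      mkRun ER r e v ((mkRun ER r e u (P₀, t₀)).1, (mkRun ER r e u (P₀, t₀)).2 * z)
        = (P₀, t₀ * F z) := by
  intro w hw
  induction hw with
  | nil =>
    intro u v huv
    obtain ⟨rfl, rfl⟩ := List.append_eq_nil_iff.mp huv.symm
    exact ⟨1, ER.O.one_mem, fun P₀ t₀ z => rfl⟩
  | intern c hc =>
    intro u v huv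
    rcases u with _ | ⟨c', u'⟩
    · simp only [List.nil_append] at huv
      subst huv
      refine ⟨fun x => x * r c, ER.mulRight_mem (r c), fun P₀ t₀ z => ?_⟩
      simp only [mkRun_nil, mkRun_cons, mkStep_intern ER r e hc]
      simp [mul_assoc]
    · have h1 : c = c' := by injection huv
      have h2 : ([] : List A) = u' ++ v := by injection huv
      obtain ⟨rfl, rfl⟩ := List.append_eq_nil_iff.mp h2.symm
      subst h1
      refine ⟨fun x => r c * x, ER.mulLeft_mem (r c), fun P₀ t₀ z => ?_⟩
      simp only [mkRun_nil, mkRun_cons, mkStep_intern ER r e hc]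
      simp [mul_assoc]
  | ext a b w' ha hb hw' ih =>
    intro u v huv
    rcases u with _ | ⟨a'', u''⟩
    · simp only [List.nil_append] at huv
      subst huv
      refine ⟨fun x => x * (e a b : Function.End R) (1 * (mkRun ER r e w' ([], 1)).2),
        ER.mulRight_mem _, fun P₀ t₀ z => ?_⟩
      simp only [mkRun_nil]
      rw [mkRun_append ER r e (a :: w') [b], mkRun_cons ER r e a w', mkStep_call ER r e ha,
        mkRun_wm ER r e hw', mkRun_cons ER r e b [], mkStep_ret ER r e hb, mkRun_nil]
      simp [mul_assoc]
    · have h1 : a = a'' := by injection huv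
      have huv2 : w' ++ [b] = u'' ++ v := by injection huv
      subst h1
      rcases List.eq_nil_or_concat v with rfl | ⟨v₁, b'', rfl⟩
      · have h3 : u'' = w' ++ [b] := by simpa using huv2.symm
        subst h3
        have hwm : WellMatched (a :: (w' ++ [b])) := WellMatched.ext a b w' ha hb hw'
        refine ⟨fun x => (mkRun ER r e (a :: (w' ++ [b])) ([], 1)).2 * x,
          ER.mulLeft_mem _, fun P₀ t₀ z => ?_⟩
        simp only [mkRun_nil]
        rw [mkRun_wm ER r e hwm]
        simp [mul_assoc]
      · simp only [List.concat_eq_append] at huv2 ⊢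
        have h4 : w' = u'' ++ v₁ ∧ [b] = [b''] :=
          List.append_inj' (by simpa [List.append_assoc] using huv2) rfl
        obtain ⟨rfl, hb'⟩ := h4
        have hbb : b = b'' := by injection hb'
        subst hbb
        obtain ⟨G, hGO, hG⟩ := ih u'' v₁ rfl
        refine ⟨(e a b : Function.End R) * G, ER.O.mul_mem (e a b).2 hGO, fun P₀ t₀ z => ?_⟩
        rw [mkRun_cons ER r e a u'', mkStep_call ER r e ha, mkRun_append, hG,
          mkRun_cons ER r e b [], mkStep_ret ER r e hb, mkRun_nil]
        simp only [one_mul]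
        rfl
  | append w₁ w₂ h₁ h₂ ih₁ ih₂ =>
    intro u₀ v₀ huv
    rcases List.append_eq_append_iff.mp huv with ⟨a', ha1, ha2⟩ | ⟨c', hc1, hc2⟩
    · obtain ⟨F₂, hO, hF₂⟩ := ih₂ a' v₀ ha2
      refine ⟨fun x => (mkRun ER r e w₁ ([], 1)).2 * F₂ x,
        ER.O.mul_mem (ER.mulLeft_mem _) hO, fun P₀ t₀ z => ?_⟩
      rw [ha1, mkRun_append ER r e w₁ a', mkRun_wm ER r e h₁, hF₂, mul_assoc]
    · obtain ⟨F₁, hO, hF₁⟩ := ih₁ u₀ c' hc1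
      refine ⟨fun x => F₁ x * (mkRun ER r e w₂ ([], 1)).2,
        ER.O.mul_mem (ER.mulRight_mem _) hO, fun P₀ t₀ z => ?_⟩
      rw [hc2, mkRun_append, hF₁, mkRun_wm ER r e h₂, mul_assoc]

/-- The `Ext`-morphism from the free `Ext`-algebra determined by the data `r`, `e`. -/
noncomputable def mkExtHom : ExtHomWM A ER where
  toMonoidHom := mkM ER r e
  op u v h := ⟨(mkStar ER r e h u v rfl).choose, (mkStar ER r e h u v rfl).choose_spec.1⟩
  op_one := by
    apply Subtype.ext
    funext z
    have hF := (mkStar ER r e WellMatched.nil [] [] rfl).choose_spec.2 [] 1 z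
    have := congrArg Prod.snd hF
    simp only [mkRun_nil, one_mul] at this
    show _ = z
    simpa using this.symm
  op_comp u v h u' v' h' h'' := by
    apply Subtype.ext
    funext z
    have hF := (mkStar ER r e h u v rfl).choose_spec.2
    have h1 := (mkStar ER r e h' u' v' rfl).choose_spec.2
      (mkRun ER r e u ([], 1)).1 (mkRun ER r e u ([], 1)).2 z
    rw [Prod.mk.eta] at h1
    have hF'' := (mkStar ER r e h'' (u ++ u') (v' ++ v) rfl).choose_spec.2 [] 1 z
    rw [mkRun_append, mkRun_append, h1, hF] at hF''
    have := congrArg Prod.snd hF''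
    simp only [one_mul] at this
    exact this.symm
  op_spec u v h x := by
    have hF := (mkStar ER r e h u v rfl).choose_spec.2 [] 1 (mkM ER r e x)
    have hx := mkRun_wm ER r e x.2 (mkRun ER r e u ([], 1)).1 (mkRun ER r e u ([], 1)).2
    rw [Prod.mk.eta] at hx
    have hrhs : mkM ER r e (extWord u v h x)
        = (mkRun ER r e v (mkRun ER r e x.1 (mkRun ER r e u ([], 1)))).2 := by
      rw [mkM_apply]
      show (mkRun ER r e ((u ++ x.1) ++ v) ([], 1)).2 = _
      rw [mkRun_append, mkRun_append]
    rw [hrhs, hx, show (mkRun ER r e x.1 ([], 1)).2 = mkM ER r e x from rfl, hF]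
    simp

lemma mkExtHom_star (u v : List A) (h : WellMatched (u ++ v)) (P₀ : List (A × R)) (t₀ z : R) :
    mkRun ER r e v ((mkRun ER r e u (P₀, t₀)).1, (mkRun ER r e u (P₀, t₀)).2 * z)
      = (P₀, t₀ * ((mkExtHom ER r e).op u v h : Function.End R) z) :=
  (mkStar ER r e h u v rfl).choose_spec.2 P₀ t₀ z

lemma mkExtHom_m_intern {c : A} (hc : VPAlphabet.kind c = VPKind.intern)
    (h : WellMatched [c]) : (mkExtHom ER r e).toMonoidHom ⟨[c], h⟩ = r c := by
  show (mkRun ER r e [c] ([], 1)).2 = r c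
  rw [mkRun_cons, mkStep_intern ER r e hc]
  simp

lemma mkExtHom_op_elem {a b : A} (ha : VPAlphabet.kind a = VPKind.call)
    (hb : VPAlphabet.kind b = VPKind.ret) (h : WellMatched ([a] ++ [b])) :
    (mkExtHom ER r e).op [a] [b] h = e a b := by
  apply Subtype.ext
  funext z
  have hF := mkExtHom_star ER r e [a] [b] h [] 1 z
  simp only [mkRun_cons, mkRun_nil, mkStep_call ER r e ha] at hF
  simp only [mkStep_ret ER r e hb] at hF
  have := congrArg Prod.snd hF
  simp only [one_mul] at this
  exact this.symm

end Machine
section Transfer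

variable {R S : Type*} [Monoid R] [Monoid S] {ER : ExtAlgebra R} {ES : ExtAlgebra S}

lemma extHom_transfer (φ : ExtHomWM A ER) (χ : ExtHomWM A ES) (f : R →* S)
    (hint : ∀ c (hc : VPAlphabet.kind c = VPKind.intern),
      f (φ.toMonoidHom ⟨[c], WellMatched.intern c hc⟩)
        = χ.toMonoidHom ⟨[c], WellMatched.intern c hc⟩)
    (hop : ∀ a b (_ : VPAlphabet.kind a = VPKind.call) (_ : VPAlphabet.kind b = VPKind.ret)
      (h : WellMatched ([a] ++ [b])) (x : R),
      f ((φ.op [a] [b] h : Function.End R) x) = (χ.op [a] [b] h : Function.End S) (f x)) :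
    ∀ x : WM A, f (φ.toMonoidHom x) = χ.toMonoidHom x := by
  have main : ∀ w (hw : WellMatched w),
      f (φ.toMonoidHom ⟨w, hw⟩) = χ.toMonoidHom ⟨w, hw⟩ := by
    intro w hw
    induction hw with
    | nil =>
      have h1 : (⟨[], WellMatched.nil⟩ : WM A) = (1 : WM A) := rfl
      rw [h1, map_one, map_one, map_one]
    | intern c hc => exact hint c hc
    | ext a b w' ha hb hw' ih =>
      have hab : WellMatched ([a] ++ [b]) := WellMatched.ext a b [] ha hb WellMatched.nil
      have harg : (⟨a :: w' ++ [b], WellMatched.ext a b w' ha hb hw'⟩ : WM A)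
          = extWord [a] [b] hab ⟨w', hw'⟩ := Subtype.ext (by show a :: w' ++ [b] = [a] ++ w' ++ [b]; simp)
      have keyφ : φ.toMonoidHom ⟨a :: w' ++ [b], WellMatched.ext a b w' ha hb hw'⟩
          = (φ.op [a] [b] hab : Function.End R) (φ.toMonoidHom ⟨w', hw'⟩) := by
        rw [harg]; exact (φ.op_spec _ _ _ _).symm
      have keyχ : χ.toMonoidHom ⟨a :: w' ++ [b], WellMatched.ext a b w' ha hb hw'⟩
          = (χ.op [a] [b] hab : Function.End S) (χ.toMonoidHom ⟨w', hw'⟩) := by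
        rw [harg]; exact (χ.op_spec _ _ _ _).symm
      rw [keyφ, keyχ, hop a b ha hb hab, ih]
    | append u v hu hv ihu ihv =>
      have h1 : φ.toMonoidHom ⟨u ++ v, WellMatched.append u v hu hv⟩
          = φ.toMonoidHom ⟨u, hu⟩ * φ.toMonoidHom ⟨v, hv⟩ :=
        map_mul φ.toMonoidHom ⟨u, hu⟩ ⟨v, hv⟩
      have h2 : χ.toMonoidHom ⟨u ++ v, WellMatched.append u v hu hv⟩
          = χ.toMonoidHom ⟨u, hu⟩ * χ.toMonoidHom ⟨v, hv⟩ :=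
        map_mul χ.toMonoidHom ⟨u, hu⟩ ⟨v, hv⟩
      rw [h1, h2, map_mul, ihu, ihv]
  intro x
  exact main x.1 x.2

end Transfer

section Topo

lemma completeSpace_bot (X : Type*) : @CompleteSpace X ⊥ := by
  letI : UniformSpace X := ⊥
  refine ⟨fun {f} hf => ?_⟩
  obtain ⟨x, rfl⟩ := DiscreteUniformity.eq_pure_of_cauchy hf
  exact ⟨x, pure_le_nhds x⟩

open UniformSpace in
lemma psi_unique [Finite A] {R : Type*} {ψ₁ ψ₂ : Completion (WM A) → R}
    (h₁ : @Continuous _ _ _ ⊥ ψ₁) (h₂ : @Continuous _ _ _ ⊥ ψ₂)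
    (h : ∀ x : WM A, ψ₁ ↑x = ψ₂ ↑x) : ψ₁ = ψ₂ := by
  letI : TopologicalSpace R := ⊥
  haveI : DiscreteTopology R := ⟨rfl⟩
  apply Continuous.ext_on (Completion.denseRange_coe) h₁ h₂
  rintro _ ⟨x, rfl⟩
  exact h x

open UniformSpace in
lemma psi_exists [Finite A] {R : Type} [Monoid R] [Finite R] {ER : ExtAlgebra R}
    (φ : ExtHomWM A ER) :
    ∃ ψ : Completion (WM A) → R, (@Continuous _ _ _ ⊥ ψ) ∧
      ∀ x : WM A, ψ ↑x = φ.toMonoidHom x := by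
  classical
  have hloc : ∀ x y : WM A, dist x y < (2⁻¹ : ℝ) ^ (Nat.card R) →
      φ.toMonoidHom x = φ.toMonoidHom y := by
    intro x y hxy
    by_contra hne
    rcases eq_or_ne x y with rfl | hxyne
    · exact hne rfl
    have hsb : SepBound (Nat.card R) x y := ⟨⟨R, ER⟩, φ, le_rfl, hne⟩
    have hle : sepDeg x y ≤ Nat.card R := Nat.sInf_le hsb
    have hd : dist x y = (2⁻¹ : ℝ) ^ sepDeg x y := by
      show pdist x y = _
      rw [pdist, if_neg hxyne]
    rw [hd] at hxy
    have := pow_le_pow_of_le_one (by norm_num : (0:ℝ) ≤ 2⁻¹) (by norm_num) hle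
    linarith
  letI : UniformSpace R := ⊥
  haveI : DiscreteTopology R := ⟨rfl⟩
  haveI : CompleteSpace R := completeSpace_bot R
  have hUC : UniformContinuous (φ.toMonoidHom : WM A → R) := by
    rw [UniformContinuous, bot_uniformity, Filter.tendsto_principal]
    filter_upwards [Metric.dist_mem_uniformity
      (show (0:ℝ) < (2⁻¹ : ℝ) ^ (Nat.card R) by positivity)] with p hp
    simpa [Prod.map, SetRel.id] using hloc p.1 p.2 hp
  refine ⟨Completion.extension (φ.toMonoidHom : WM A → R), ?_, ?_⟩
  · exact Completion.continuous_extension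
  · intro x
    exact Completion.extension_coe hUC x

end Topo

section PartAQuot

lemma quot_lift {R S : Type*} [Monoid R] [Monoid S] {ER : ExtAlgebra R} {ES : ExtAlgebra S}
    (h : ExtAlgHom ES ER) (hsm : Function.Surjective h.toMonoidHom)
    (hso : Function.Surjective h.opMap) (φ : ExtHomWM A ER) :
    ∃ χ : ExtHomWM A ES, ∀ x : WM A, h.toMonoidHom (χ.toMonoidHom x) = φ.toMonoidHom x := by
  classical
  refine ⟨mkExtHom ES
    (fun c => if hc : VPAlphabet.kind c = VPKind.intern then
        Classical.choose (hsm (φ.toMonoidHom ⟨[c], WellMatched.intern c hc⟩)) else 1)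
    (fun a b => if hab : VPAlphabet.kind a = VPKind.call ∧ VPAlphabet.kind b = VPKind.ret then
        Classical.choose (hso (φ.op [a] [b]
          (WellMatched.ext a b [] hab.1 hab.2 WellMatched.nil))) else 1), ?_⟩
  apply extHom_transfer _ φ h.toMonoidHom
  · intro c hc
    rw [mkExtHom_m_intern _ _ _ hc]
    rw [dif_pos hc]
    exact Classical.choose_spec (hsm _)
  · intro a b ha hb hh x
    rw [mkExtHom_op_elem _ _ _ ha hb hh]
    rw [dif_pos (⟨ha, hb⟩ : _ ∧ _), ← h.compat]
    exact congrFun (congrArg Subtype.val (Classical.choose_spec (hso _))) (h.toMonoidHom x)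

lemma satA_quot (E : EqSet) (R S : BExt) (hS : SatisfiesEqs S E)
    (hq : IsQuotientOf R.ext S.ext) : SatisfiesEqs R E := by
  obtain ⟨h, hsm, hso⟩ := hq
  intro B _ _ p hp φ ψ hψ
  obtain ⟨χ, hχ⟩ := quot_lift h hsm hso φ
  obtain ⟨ψS, hψSc, hψSa⟩ := psi_exists χ
  have h1 := hS B p hp χ ψS ⟨hψSc, hψSa⟩
  have hcomp : @Continuous _ _ _ ⊥ (h.toMonoidHom ∘ ψS) := by
    letI : TopologicalSpace S.carrier := ⊥
    letI : TopologicalSpace R.carrier := ⊥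
    exact Continuous.comp continuous_bot hψSc
  have h2 : ψ = h.toMonoidHom ∘ ψS := by
    apply psi_unique hψ.1 hcomp
    intro x
    show ψ ↑x = h.toMonoidHom (ψS ↑x)
    rw [hψ.2, hψSa, hχ]
  rw [h2]
  show h.toMonoidHom (ψS p.1) = h.toMonoidHom (ψS p.2)
  rw [h1]

end PartAQuot

section PartASub

lemma satA_sub (E : EqSet) (S : BExt) (T : SubExt S.ext) (hS : SatisfiesEqs S E) :
    SatisfiesEqs { carrier := T.carrier, ext := T.toExtAlgebra } E := by
  intro B _ _ p hp φ ψ hψ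
  classical
  have hop_mem : ∀ (a b : B) (hab : VPAlphabet.kind a = VPKind.call ∧
      VPAlphabet.kind b = VPKind.ret),
      Classical.choose ((φ.op [a] [b]
        (WellMatched.ext a b [] hab.1 hab.2 WellMatched.nil)).2) ∈ S.ext.O := fun a b hab =>
    T.ops_le (Classical.choose_spec ((φ.op [a] [b]
      (WellMatched.ext a b [] hab.1 hab.2 WellMatched.nil)).2)).1
  set χ : ExtHomWM B S.ext := mkExtHom S.ext
    (fun c => if hc : VPAlphabet.kind c = VPKind.intern then
        (φ.toMonoidHom ⟨[c], WellMatched.intern c hc⟩ : S.carrier) else 1)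
    (fun a b => if hab : VPAlphabet.kind a = VPKind.call ∧ VPAlphabet.kind b = VPKind.ret then
        ⟨Classical.choose ((φ.op [a] [b]
          (WellMatched.ext a b [] hab.1 hab.2 WellMatched.nil)).2), hop_mem a b hab⟩
      else 1) with hχ
  have htrans : ∀ x : WM B, (T.carrier.subtype) (φ.toMonoidHom x) = χ.toMonoidHom x := by
    apply extHom_transfer φ χ T.carrier.subtype
    · intro c hc
      rw [hχ, mkExtHom_m_intern _ _ _ hc]
      rw [dif_pos hc]
      rfl
    · intro a b ha hb hh x
      rw [hχ, mkExtHom_op_elem _ _ _ ha hb hh]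
      rw [dif_pos (⟨ha, hb⟩ : _ ∧ _)]
      exact (Classical.choose_spec ((φ.op [a] [b] hh).2)).2 x
  have hcont : @Continuous _ _ _ ⊥ (fun u => ((ψ u : T.carrier) : S.carrier)) := by
    letI : TopologicalSpace T.carrier := ⊥
    letI : TopologicalSpace S.carrier := ⊥
    exact Continuous.comp continuous_bot hψ.1
  have h1 := hS B p hp χ (fun u => (ψ u : S.carrier))
    ⟨hcont, fun x => by
      show ((ψ ↑x : T.carrier) : S.carrier) = _
      rw [hψ.2]
      exact htrans x⟩
  exact Subtype.ext h1

end PartASub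

section PartAProd

variable {R S : Type*} [Monoid R] [Monoid S] {ER : ExtAlgebra R} {ES : ExtAlgebra S}

lemma prod_decomp {e : Function.End (R × S)} (he : e ∈ (prodExt ER ES).O) :
    ∃ f ∈ ER.O, ∃ g ∈ ES.O, ∀ p : R × S, e p = (f p.1, g p.2) := by
  induction he using Submonoid.closure_induction with
  | mem f hf =>
    rcases hf with ⟨f', hf', hff⟩ | ⟨g', hg', hgg⟩
    · exact ⟨f', hf', 1, ES.O.one_mem, fun p => by rw [hff]; rfl⟩
    · exact ⟨1, ER.O.one_mem, g', hg', fun p => by rw [hgg]; rfl⟩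
  | one => exact ⟨1, ER.O.one_mem, 1, ES.O.one_mem, fun p => rfl⟩
  | mul e e' he he' ihe ihe' =>
    obtain ⟨f, hf, g, hg, hfg⟩ := ihe
    obtain ⟨f', hf', g', hg', hfg'⟩ := ihe'
    refine ⟨f * f', ER.O.mul_mem hf hf', g * g', ES.O.mul_mem hg hg', fun p => ?_⟩
    show e (e' p) = _
    rw [hfg', hfg]
    rfl

/-- Projection of an `Ext`-morphism into a product onto the first factor. -/
noncomputable def projExtHom1 (φ : ExtHomWM A (prodExt ER ES)) : ExtHomWM A ER where
  toMonoidHom := (MonoidHom.fst R S).comp φ.toMonoidHom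
  op u v h := ⟨fun x => ((φ.op u v h : Function.End (R × S)) (x, 1)).1, by
    obtain ⟨f, hf, g, hg, hfg⟩ := prod_decomp (φ.op u v h).2
    have he : (fun x => ((φ.op u v h : Function.End (R × S)) (x, 1)).1) = f :=
      funext fun x => by rw [hfg]
    rw [he]
    exact hf⟩
  op_one := by
    apply Subtype.ext
    funext x
    show ((φ.op [] [] WellMatched.nil : Function.End (R × S)) (x, 1)).1
      = (1 : Function.End R) x
    rw [φ.op_one]
    rfl
  op_comp u v h u' v' h' h'' := by
    apply Subtype.ext
    funext x
    obtain ⟨f, hf, g, hg, hfg⟩ := prod_decomp (φ.op u v h).2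
    obtain ⟨f', hf', g', hg', hfg'⟩ := prod_decomp (φ.op u' v' h').2
    show ((φ.op (u ++ u') (v' ++ v) h'' : Function.End (R × S)) (x, 1)).1
      = ((φ.op u v h : Function.End (R × S))
          (((φ.op u' v' h' : Function.End (R × S)) (x, 1)).1, 1)).1
    rw [φ.op_comp u v h u' v' h' h'']
    show ((φ.op u v h : Function.End (R × S))
        ((φ.op u' v' h' : Function.End (R × S)) (x, 1))).1 = _
    simp [hfg, hfg']
  op_spec u v h x := by
    obtain ⟨f, hf, g, hg, hfg⟩ := prod_decomp (φ.op u v h).2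
    show ((φ.op u v h : Function.End (R × S)) ((φ.toMonoidHom x).1, 1)).1
      = (φ.toMonoidHom (extWord u v h x)).1
    rw [← φ.op_spec u v h x]
    simp [hfg]

/-- Projection of an `Ext`-morphism into a product onto the second factor. -/
noncomputable def projExtHom2 (φ : ExtHomWM A (prodExt ER ES)) : ExtHomWM A ES where
  toMonoidHom := (MonoidHom.snd R S).comp φ.toMonoidHom
  op u v h := ⟨fun y => ((φ.op u v h : Function.End (R × S)) (1, y)).2, by
    obtain ⟨f, hf, g, hg, hfg⟩ := prod_decomp (φ.op u v h).2
    have he : (fun y => ((φ.op u v h : Function.End (R × S)) (1, y)).2) = g :=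
      funext fun y => by rw [hfg]
    rw [he]
    exact hg⟩
  op_one := by
    apply Subtype.ext
    funext y
    show ((φ.op [] [] WellMatched.nil : Function.End (R × S)) (1, y)).2
      = (1 : Function.End S) y
    rw [φ.op_one]
    rfl
  op_comp u v h u' v' h' h'' := by
    apply Subtype.ext
    funext y
    obtain ⟨f, hf, g, hg, hfg⟩ := prod_decomp (φ.op u v h).2
    obtain ⟨f', hf', g', hg', hfg'⟩ := prod_decomp (φ.op u' v' h').2
    show ((φ.op (u ++ u') (v' ++ v) h'' : Function.End (R × S)) (1, y)).2
      = ((φ.op u v h : Function.End (R × S))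
          (1, ((φ.op u' v' h' : Function.End (R × S)) (1, y)).2)).2
    rw [φ.op_comp u v h u' v' h' h'']
    show ((φ.op u v h : Function.End (R × S))
        ((φ.op u' v' h' : Function.End (R × S)) (1, y))).2 = _
    simp [hfg, hfg']
  op_spec u v h x := by
    obtain ⟨f, hf, g, hg, hfg⟩ := prod_decomp (φ.op u v h).2
    show ((φ.op u v h : Function.End (R × S)) (1, (φ.toMonoidHom x).2)).2
      = (φ.toMonoidHom (extWord u v h x)).2
    rw [← φ.op_spec u v h x]
    simp [hfg]

lemma satA_prod (E : EqSet) (R S : BExt) (hR : SatisfiesEqs R E) (hS : SatisfiesEqs S E) :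
    SatisfiesEqs { carrier := R.carrier × S.carrier, ext := prodExt R.ext S.ext } E := by
  intro B _ _ p hp φ ψ hψ
  have hc1 : @Continuous _ _ _ ⊥ (fun u => (ψ u).1) := by
    letI : TopologicalSpace (R.carrier × S.carrier) := ⊥
    letI : TopologicalSpace R.carrier := ⊥
    exact Continuous.comp continuous_bot hψ.1
  have hc2 : @Continuous _ _ _ ⊥ (fun u => (ψ u).2) := by
    letI : TopologicalSpace (R.carrier × S.carrier) := ⊥
    letI : TopologicalSpace S.carrier := ⊥
    exact Continuous.comp continuous_bot hψ.1
  have h1 := hR B p hp (projExtHom1 φ) (fun u => (ψ u).1)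
    ⟨hc1, fun x => by
      show (ψ ↑x).1 = _
      rw [hψ.2 x]
      rfl⟩
  have h2 := hS B p hp (projExtHom2 φ) (fun u => (ψ u).2)
    ⟨hc2, fun x => by
      show (ψ ↑x).2 = _
      rw [hψ.2 x]
      rfl⟩
  exact Prod.ext h1 h2

end PartAProd
section Finiteness

instance (X : Type*) [Finite X] : Finite (Function.End X) :=
  inferInstanceAs (Finite (X → X))

instance (X : Type*) [Finite X] : Finite (Mul X) :=
  Finite.of_equiv (X → X → X)
    ⟨fun f => ⟨f⟩, fun m => @Mul.mul X m, fun _ => rfl, fun ⟨_⟩ => rfl⟩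

instance (X : Type*) [Finite X] : Finite (Monoid X) :=
  Finite.of_injective (fun M : Monoid X => M.toMul) fun M₁ M₂ h =>
    Monoid.ext (congrArg (fun m : Mul X => (@HMul.hMul X X X (@instHMul X m) : X → X → X)) h)

instance (X : Type*) [Monoid X] [Finite X] : Finite (Submonoid X) :=
  Finite.of_injective (fun S : Submonoid X => (S : Set X)) SetLike.coe_injective

lemma extAlgebra_O_injective (X : Type*) [Monoid X] :
    Function.Injective (fun E : ExtAlgebra X => E.O) := by
  rintro ⟨O₁, a₁, b₁⟩ ⟨O₂, a₂, b₂⟩ h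
  have h' : O₁ = O₂ := h
  subst h'
  rfl

instance (X : Type*) [Monoid X] [Finite X] : Finite (ExtAlgebra X) :=
  Finite.of_injective _ (extAlgebra_O_injective X)

/-- An instance-free copy of `Fin k`, used as carrier for transported algebras. -/
def BCar (k : ℕ) : Type := Fin k

instance (k : ℕ) : Finite (BCar k) := inferInstanceAs (Finite (Fin k))

/-- The data of a small evaluation algebra: a monoid structure on `BCar k` for `k ≤ n`,
an `Ext`-algebra structure, and interpretation data for the alphabet. -/
def BData (n : ℕ) : Type :=
  Σ (k : Fin (n + 1)) (M : Monoid (BCar k.1)) (E : @ExtAlgebra (BCar k.1) M),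
    ((A → BCar k.1) × (A → A → E.O))

instance bDataFinite (n : ℕ) [Finite A] : Finite (BData (A := A) n) := by
  haveI h3 : ∀ (k : Fin (n+1)) (M : Monoid (BCar k.1)) (E : @ExtAlgebra (BCar k.1) M),
      Finite ((A → BCar k.1) × (A → A → E.O)) := fun k M E => by infer_instance
  haveI h2 : ∀ (k : Fin (n+1)) (M : Monoid (BCar k.1)),
      Finite (Σ E : @ExtAlgebra (BCar k.1) M, ((A → BCar k.1) × (A → A → E.O))) := fun k M => by
    letI := M
    infer_instance
  haveI h1 : ∀ (k : Fin (n+1)),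
      Finite (Σ (M : Monoid (BCar k.1)) (E : @ExtAlgebra (BCar k.1) M),
        ((A → BCar k.1) × (A → A → E.O))) := fun k => by infer_instance
  exact inferInstanceAs (Finite (Σ (k : Fin (n + 1)) (M : Monoid (BCar k.1))
    (E : @ExtAlgebra (BCar k.1) M), ((A → BCar k.1) × (A → A → E.O))))

noncomputable def bDataEval [Finite A] {n : ℕ} (d : BData (A := A) n) (x : WM A) : BCar d.1.1 :=
  letI := d.2.1
  (mkExtHom d.2.2.1 d.2.2.2.1 d.2.2.2.2).toMonoidHom x

/-- Conjugation of endomorphisms by an equivalence, as a monoid morphism. -/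
def conjHom {X Y : Type*} (g : X ≃ Y) : Function.End X →* Function.End Y where
  toFun f := fun y => g (f (g.symm y))
  map_one' := by
    funext y
    show g (g.symm y) = y
    exact g.apply_symm_apply y
  map_mul' f f' := by
    funext y
    show g (f (f' (g.symm y))) = g (f (g.symm (g (f' (g.symm y)))))
    rw [Equiv.symm_apply_apply]

lemma sep_detect [Finite A] {n : ℕ} {x y : WM A} (h : SepBound n x y) :
    ∃ d : BData (A := A) n, bDataEval d x ≠ bDataEval d y := by
  classical
  obtain ⟨Rb, φ, hcard, hne⟩ := h
  have hk : Nat.card Rb.carrier < n + 1 := Nat.lt_succ_of_le hcard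
  set k := Nat.card Rb.carrier with hkdef
  let g : Rb.carrier ≃ BCar k := Finite.equivFin Rb.carrier
  letI Mk : Monoid (BCar k) := g.symm.monoid
  let gHom : Rb.carrier →* BCar k :=
    { toFun := g
      map_one' := by
        show g 1 = (1 : BCar k)
        rw [Equiv.one_def g.symm]
        simp
      map_mul' := fun xx yy => by
        show g (xx * yy) = g xx * g yy
        rw [Equiv.mul_def g.symm]
        simp }
  let E' : @ExtAlgebra (BCar k) Mk :=
    { O := Submonoid.map (conjHom g) Rb.ext.O
      mulLeft_mem := fun m => ⟨fun r => g.symm m * r, Rb.ext.mulLeft_mem _, by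
        funext z
        exact (Equiv.mul_def g.symm m z).symm⟩
      mulRight_mem := fun m => ⟨fun r => r * g.symm m, Rb.ext.mulRight_mem _, by
        funext z
        exact (Equiv.mul_def g.symm z m).symm⟩ }
  let φ' : ExtHomWM A E' :=
    { toMonoidHom := gHom.comp φ.toMonoidHom
      op := fun u v h => ⟨conjHom g ↑(φ.op u v h), Submonoid.mem_map_of_mem _ (φ.op u v h).2⟩
      op_one := by
        apply Subtype.ext
        show conjHom g ↑(φ.op [] [] WellMatched.nil) = (1 : Function.End (BCar k))
        rw [φ.op_one, OneMemClass.coe_one, map_one]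
      op_comp := fun u v h u' v' h' h'' => by
        apply Subtype.ext
        show conjHom g ↑(φ.op (u ++ u') (v' ++ v) h'') = _
        rw [φ.op_comp u v h u' v' h' h'', MulMemClass.coe_mul, map_mul]
        rfl
      op_spec := fun u v h xx => by
        show g ((φ.op u v h : Function.End Rb.carrier) (g.symm (g (φ.toMonoidHom xx))))
          = g (φ.toMonoidHom (extWord u v h xx))
        rw [Equiv.symm_apply_apply, φ.op_spec] }
  let d : BData (A := A) n := ⟨⟨k, hk⟩, Mk, E',
    (fun c => if hc : VPAlphabet.kind c = VPKind.intern then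
        φ'.toMonoidHom ⟨[c], WellMatched.intern c hc⟩ else 1,
     fun a b => if hab : VPAlphabet.kind a = VPKind.call ∧ VPAlphabet.kind b = VPKind.ret then
        φ'.op [a] [b] (WellMatched.ext a b [] hab.1 hab.2 WellMatched.nil) else 1)⟩
  have heval : ∀ z : WM A, bDataEval d z = φ'.toMonoidHom z := by
    have htr := extHom_transfer φ' (mkExtHom E'
      (fun c => if hc : VPAlphabet.kind c = VPKind.intern then
        φ'.toMonoidHom ⟨[c], WellMatched.intern c hc⟩ else 1)
      (fun a b => if hab : VPAlphabet.kind a = VPKind.call ∧ VPAlphabet.kind b = VPKind.ret then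
        φ'.op [a] [b] (WellMatched.ext a b [] hab.1 hab.2 WellMatched.nil) else 1))
      (MonoidHom.id (BCar k)) ?_ ?_
    · intro z
      exact (htr z).symm
    · intro c hc
      rw [mkExtHom_m_intern _ _ _ hc, dif_pos hc]
      rfl
    · intro a b ha hb hh xx
      rw [mkExtHom_op_elem _ _ _ ha hb hh, dif_pos (⟨ha, hb⟩ : _ ∧ _)]
      rfl
  refine ⟨d, ?_⟩
  rw [heval, heval]
  intro hcontra
  exact hne (g.injective hcontra)

lemma sepBound_mono {n m : ℕ} {x y : WM A} (hnm : n ≤ m) (h : SepBound n x y) :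
    SepBound m x y := by
  obtain ⟨R, φ, hcard, hne⟩ := h
  exact ⟨R, φ, hcard.trans hnm, hne⟩

lemma totallyBounded_WM [Finite A] : TotallyBounded (Set.univ : Set (WM A)) := by
  rw [Metric.totallyBounded_iff]
  intro ε hε
  obtain ⟨n, hn⟩ : ∃ n : ℕ, (2⁻¹ : ℝ) ^ n < ε :=
    exists_pow_lt_of_lt_one hε (by norm_num)
  classical
  let c : WM A → (∀ d : BData (A := A) n, BCar d.1.1) := fun x d => bDataEval d x
  have hker : ∀ x y : WM A, c x = c y → dist x y < ε := by
    intro x y hc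
    rcases eq_or_ne x y with rfl | hxy
    · simpa [dist_self] using hε
    have hnsb : ¬ SepBound n x y := by
      intro hsb
      obtain ⟨d, hd⟩ := sep_detect hsb
      exact hd (congrFun hc d)
    have hge : n ≤ sepDeg x y := by
      by_contra hlt
      push_neg at hlt
      have hmem : SepBound (sepDeg x y) x y := by
        have hne : {m | SepBound m x y}.Nonempty := exists_sepBound hxy
        exact Nat.sInf_mem hne
      exact hnsb (sepBound_mono (le_of_lt hlt) hmem)
    have hd : dist x y = (2⁻¹ : ℝ) ^ sepDeg x y := by
      show pdist x y = _
      rw [pdist, if_neg hxy]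
    rw [hd]
    calc (2⁻¹ : ℝ) ^ sepDeg x y ≤ (2⁻¹ : ℝ) ^ n :=
          pow_le_pow_of_le_one (by norm_num) (by norm_num) hge
      _ < ε := hn
  haveI : Finite ↥(Set.range c) := Set.Finite.to_subtype (Set.toFinite _)
  refine ⟨Set.range (fun v : Set.range c => Set.rangeSplitting c v), Set.finite_range _, ?_⟩
  intro x _
  simp only [Set.mem_iUnion]
  refine ⟨Set.rangeSplitting c ⟨c x, Set.mem_range_self x⟩, ⟨⟨c x, Set.mem_range_self x⟩, rfl⟩, ?_⟩
  have := Set.apply_rangeSplitting c ⟨c x, Set.mem_range_self x⟩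
  rw [Metric.mem_ball]
  exact hker x _ (this.symm)

open UniformSpace in
instance [Finite A] : CompactSpace (Completion (WM A)) := by
  rw [← isCompact_univ_iff]
  have h1 : (Set.univ : Set (Completion (WM A)))
      = closure (Set.range ((↑) : WM A → Completion (WM A))) :=
    (Completion.denseRange_coe).closure_range.symm
  rw [h1]
  have htb : TotallyBounded (Set.range ((↑) : WM A → Completion (WM A))) := by
    rw [← Set.image_univ]
    exact TotallyBounded.image totallyBounded_WM (Completion.uniformContinuous_coe _)
  exact isCompact_iff_totallyBounded_isComplete.mpr ⟨htb.closure, isClosed_closure.isComplete⟩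

end Finiteness
section Pairing

/-- The trivial `Ext`-morphism into the one-point algebra. -/
def trivialExtHom : ExtHomWM A punitExt where
  toMonoidHom :=
    { toFun := fun _ => PUnit.unit
      map_one' := rfl
      map_mul' := fun _ _ => rfl }
  op _ _ _ := 1
  op_one := rfl
  op_comp _ _ _ _ _ _ _ := (one_mul 1).symm
  op_spec _ _ _ _ := rfl

variable {R S : Type*} [Monoid R] [Monoid S] {ER : ExtAlgebra R} {ES : ExtAlgebra S}

/-- Pairing of two `Ext`-morphisms into the product algebra. -/
def pairExtHom (φ : ExtHomWM A ER) (χ : ExtHomWM A ES) : ExtHomWM A (prodExt ER ES) where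
  toMonoidHom := MonoidHom.prod φ.toMonoidHom χ.toMonoidHom
  op u v h := ⟨fun p => ((φ.op u v h : Function.End R) p.1, (χ.op u v h : Function.End S) p.2), by
    have hmem1 : (fun p : R × S => ((φ.op u v h : Function.End R) p.1, p.2)) ∈ prodGens ER ES :=
      Or.inl ⟨_, (φ.op u v h).2, fun p => rfl⟩
    have hmem2 : (fun p : R × S => (p.1, (χ.op u v h : Function.End S) p.2)) ∈ prodGens ER ES :=
      Or.inr ⟨_, (χ.op u v h).2, fun p => rfl⟩
    have c1 : (fun p : R × S => ((φ.op u v h : Function.End R) p.1, p.2))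
        ∈ Submonoid.closure (prodGens ER ES) := Submonoid.subset_closure hmem1
    have c2 : (fun p : R × S => (p.1, (χ.op u v h : Function.End S) p.2))
        ∈ Submonoid.closure (prodGens ER ES) := Submonoid.subset_closure hmem2
    exact mul_mem c1 c2⟩
  op_one := by
    apply Subtype.ext
    funext p
    show ((φ.op [] [] WellMatched.nil : Function.End R) p.1,
      (χ.op [] [] WellMatched.nil : Function.End S) p.2) = p
    rw [φ.op_one, χ.op_one]
    rfl
  op_comp u v h u' v' h' h'' := by
    apply Subtype.ext
    funext p
    show ((φ.op (u ++ u') (v' ++ v) h'' : Function.End R) p.1,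
        (χ.op (u ++ u') (v' ++ v) h'' : Function.End S) p.2)
      = ((φ.op u v h : Function.End R) ((φ.op u' v' h' : Function.End R) p.1),
        (χ.op u v h : Function.End S) ((χ.op u' v' h' : Function.End S) p.2))
    rw [φ.op_comp u v h u' v' h' h'', χ.op_comp u v h u' v' h' h'']
    rfl
  op_spec u v h x := by
    show ((φ.op u v h : Function.End R) (φ.toMonoidHom x),
        (χ.op u v h : Function.End S) (χ.toMonoidHom x))
      = (φ.toMonoidHom (extWord u v h x), χ.toMonoidHom (extWord u v h x))
    rw [φ.op_spec, χ.op_spec]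

end Pairing
section KeyQuotient

variable {B : Type} [VPAlphabet B]

lemma key_quotient {RC : Type*} [Monoid RC] (ER : ExtAlgebra RC)
    (φ₀ : ExtHomWM B ER) (hsurj : Function.Surjective φ₀.toMonoidHom)
    (hopsurj : ∀ G : ER.O, ∃ (a b : B) (hh : WellMatched ([a] ++ [b])), φ₀.op [a] [b] hh = G)
    {SC : Type*} [Monoid SC] (ES : ExtAlgebra SC) (φS : ExtHomWM B ES)
    (hkeyW : ∀ x y : WM B, φS.toMonoidHom x = φS.toMonoidHom y →
      φ₀.toMonoidHom x = φ₀.toMonoidHom y) :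
    ∃ T : SubExt ES, IsQuotientOf ER T.toExtAlgebra := by
  classical
  set m := φS.toMonoidHom with hmdef
  set gens : Set (Function.End SC) :=
    {f | ∃ u v hh, f = ↑(φS.op u v hh)} ∪
      {f | ∃ s ∈ MonoidHom.mrange m, f = (fun x => s * x) ∨ f = (fun x => x * s)} with hgens
  have hops_le : Submonoid.closure gens ≤ ES.O := by
    rw [Submonoid.closure_le]
    rintro f (⟨u, v, hh, rfl⟩ | ⟨s, hs, (rfl | rfl)⟩)
    · exact (φS.op u v hh).2
    · exact ES.mulLeft_mem s
    · exact ES.mulRight_mem s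
  have hmaps : ∀ f ∈ Submonoid.closure gens, ∀ x ∈ MonoidHom.mrange m, f x ∈ MonoidHom.mrange m := by
    intro f hf
    induction hf using Submonoid.closure_induction with
    | mem f hf =>
      rcases hf with ⟨u, v, hh, rfl⟩ | ⟨s, hs, (rfl | rfl)⟩
      · rintro x ⟨w, rfl⟩
        rw [φS.op_spec u v hh w]
        exact ⟨extWord u v hh w, rfl⟩
      · intro x hx
        exact mul_mem hs hx
      · intro x hx
        exact mul_mem hx hs
    | one => intro x hx; exact hx
    | mul f g hf hg ihf ihg => intro x hx; exact ihf _ (ihg x hx)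
  let T : SubExt ES :=
    { carrier := MonoidHom.mrange m
      ops := Submonoid.closure gens
      ops_le := hops_le
      maps_to := hmaps
      mulLeft_mem := fun r hr => Submonoid.subset_closure (Or.inr ⟨r, hr, Or.inl rfl⟩)
      mulRight_mem := fun r hr => Submonoid.subset_closure (Or.inr ⟨r, hr, Or.inr rfl⟩) }
  have hsecex : ∀ t : T.carrier, ∃ x : WM B, m x = (t : SC) := fun t => t.2
  set sec : T.carrier → WM B := fun t => Classical.choose (hsecex t) with hsecdef
  have hsec : ∀ t, m (sec t) = (t : SC) := fun t => Classical.choose_spec (hsecex t)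
  let hmh : T.carrier →* RC :=
    { toFun := fun t => φ₀.toMonoidHom (sec t)
      map_one' := by
        have h1 : φ₀.toMonoidHom (sec 1) = φ₀.toMonoidHom (1 : WM B) :=
          hkeyW _ _ (by rw [hsec, map_one]; rfl)
        show φ₀.toMonoidHom (sec 1) = 1
        rw [h1, map_one]
      map_mul' := fun t₁ t₂ => by
        have h1 : φ₀.toMonoidHom (sec (t₁ * t₂)) = φ₀.toMonoidHom (sec t₁ * sec t₂) :=
          hkeyW _ _ (by rw [hsec, map_mul, hsec, hsec]; rfl)
        show φ₀.toMonoidHom (sec (t₁ * t₂))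
          = φ₀.toMonoidHom (sec t₁) * φ₀.toMonoidHom (sec t₂)
        rw [h1, map_mul] }
  have hmh_surj : Function.Surjective hmh := by
    intro z
    obtain ⟨x, hx⟩ := hsurj z
    refine ⟨⟨m x, ⟨x, rfl⟩⟩, ?_⟩
    show φ₀.toMonoidHom (sec ⟨m x, ⟨x, rfl⟩⟩) = z
    rw [← hx]
    exact hkeyW _ _ (hsec ⟨m x, ⟨x, rfl⟩⟩)
  have hcong : ∀ f ∈ Submonoid.closure gens, ∃ g ∈ ER.O,
      ∀ x y : WM B, f (m x) = m y → g (φ₀.toMonoidHom x) = φ₀.toMonoidHom y := by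
    intro f hf
    induction hf using Submonoid.closure_induction with
    | mem f hf =>
      rcases hf with ⟨u, v, hh, rfl⟩ | ⟨s, hs, (rfl | rfl)⟩
      · refine ⟨↑(φ₀.op u v hh), (φ₀.op u v hh).2, fun x y hxy => ?_⟩
        have h1 : m (extWord u v hh x) = m y := by
          rw [← φS.op_spec u v hh x]
          exact hxy
        have h2 := hkeyW _ _ h1
        rw [← h2, ← φ₀.op_spec]
      · obtain ⟨w, hw⟩ := hs
        refine ⟨fun z => φ₀.toMonoidHom w * z, ER.mulLeft_mem _, fun x y hxy => ?_⟩
        have h1 : m (w * x) = m y := by rw [map_mul, hw]; exact hxy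
        have h2 := hkeyW _ _ h1
        show φ₀.toMonoidHom w * φ₀.toMonoidHom x = φ₀.toMonoidHom y
        rw [← h2, map_mul]
      · obtain ⟨w, hw⟩ := hs
        refine ⟨fun z => z * φ₀.toMonoidHom w, ER.mulRight_mem _, fun x y hxy => ?_⟩
        have h1 : m (x * w) = m y := by rw [map_mul, hw]; exact hxy
        have h2 := hkeyW _ _ h1
        show φ₀.toMonoidHom x * φ₀.toMonoidHom w = φ₀.toMonoidHom y
        rw [← h2, map_mul]
    | one => exact ⟨1, ER.O.one_mem, fun x y hxy => hkeyW x y hxy⟩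
    | mul f f' hf hf' ihf ihf' =>
      obtain ⟨g, hg, hgs⟩ := ihf
      obtain ⟨g', hg', hgs'⟩ := ihf'
      refine ⟨g * g', ER.O.mul_mem hg hg', fun x y hxy => ?_⟩
      have hmem : f' (m x) ∈ MonoidHom.mrange m := hmaps f' hf' _ ⟨x, rfl⟩
      obtain ⟨x', hx'⟩ := hmem
      show g (g' (φ₀.toMonoidHom x)) = _
      rw [hgs' x x' hx'.symm]
      exact hgs x' y (by rw [hx']; exact hxy)
  have hopsG : ∀ EE : T.toExtAlgebra.O, ∃ g ∈ ER.O,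
      ∀ x y : WM B, ((EE : Function.End T.carrier) ⟨m x, ⟨x, rfl⟩⟩ : SC) = m y →
        g (φ₀.toMonoidHom x) = φ₀.toMonoidHom y := by
    intro EE
    obtain ⟨f, hf, hagree⟩ := EE.2
    obtain ⟨g, hg, hspec⟩ := hcong f hf
    refine ⟨g, hg, fun x y hxy => hspec x y ?_⟩
    exact ((hagree ⟨m x, ⟨x, rfl⟩⟩).symm.trans hxy : _)
  choose gMap hgO hgSpec using hopsG
  have hgTotal : ∀ (EE : T.toExtAlgebra.O) (x : WM B), ∃ y : WM B,
      ((EE : Function.End T.carrier) ⟨m x, ⟨x, rfl⟩⟩ : SC) = m y := by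
    intro EE x
    obtain ⟨y, hy⟩ := ((EE : Function.End T.carrier) ⟨m x, ⟨x, rfl⟩⟩).2
    exact ⟨y, hy.symm⟩
  let opM : T.toExtAlgebra.O →* ER.O :=
    { toFun := fun EE => ⟨gMap EE, hgO EE⟩
      map_one' := by
        apply Subtype.ext
        show gMap 1 = (1 : Function.End RC)
        funext z
        obtain ⟨x, rfl⟩ := hsurj z
        exact hgSpec 1 x x rfl
      map_mul' := fun EE EE' => by
        apply Subtype.ext
        show gMap (EE * EE') = gMap EE * gMap EE'
        funext z
        obtain ⟨x, rfl⟩ := hsurj z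
        obtain ⟨y', hy'⟩ := hgTotal EE' x
        obtain ⟨y, hy⟩ := hgTotal EE y'
        have hEE' : gMap EE' (φ₀.toMonoidHom x) = φ₀.toMonoidHom y' := hgSpec EE' x y' hy'
        have hEE : gMap EE (φ₀.toMonoidHom y') = φ₀.toMonoidHom y := hgSpec EE y' y hy
        have hcomp : ((EE * EE' : T.toExtAlgebra.O) : Function.End T.carrier) ⟨m x, ⟨x, rfl⟩⟩
            = (EE : Function.End T.carrier) ⟨m y', ⟨y', rfl⟩⟩ := by
          show (EE : Function.End T.carrier) ((EE' : Function.End T.carrier) ⟨m x, ⟨x, rfl⟩⟩) = _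
          exact congrArg (EE : Function.End T.carrier) (Subtype.ext hy')
        have hfull : gMap (EE * EE') (φ₀.toMonoidHom x) = φ₀.toMonoidHom y :=
          hgSpec (EE * EE') x y (by rw [hcomp]; exact hy)
        show gMap (EE * EE') (φ₀.toMonoidHom x) = gMap EE (gMap EE' (φ₀.toMonoidHom x))
        rw [hfull, hEE', hEE] }
  have hcompat : ∀ (EE : T.toExtAlgebra.O) (t : T.carrier),
      (opM EE : Function.End RC) (hmh t) = hmh ((EE : Function.End T.carrier) t) := by
    intro EE t
    obtain ⟨y, hy⟩ := ((EE : Function.End T.carrier) t).2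
    have h1 : ((EE : Function.End T.carrier) ⟨m (sec t), ⟨sec t, rfl⟩⟩ : SC) = m y := by
      have ht : (⟨m (sec t), ⟨sec t, rfl⟩⟩ : T.carrier) = t := Subtype.ext (hsec t)
      rw [ht]
      exact hy.symm
    have h2 : gMap EE (φ₀.toMonoidHom (sec t)) = φ₀.toMonoidHom y := hgSpec EE (sec t) y h1
    show gMap EE (φ₀.toMonoidHom (sec t)) = φ₀.toMonoidHom (sec ((EE : Function.End T.carrier) t))
    rw [h2]
    exact hkeyW y (sec _) (hy.trans (hsec _).symm)
  have hopM_surj : Function.Surjective opM := by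
    intro G
    obtain ⟨a, b, hh, hGop⟩ := hopsurj G
    have hfmem : (↑(φS.op [a] [b] hh) : Function.End SC) ∈ Submonoid.closure gens :=
      Submonoid.subset_closure (Or.inl ⟨[a], [b], hh, rfl⟩)
    set EE : T.toExtAlgebra.O :=
      ⟨fun t => ⟨(φS.op [a] [b] hh : Function.End SC) t.1, hmaps _ hfmem t.1 t.2⟩,
        ⟨_, hfmem, fun t => rfl⟩⟩ with hEEdef
    refine ⟨EE, ?_⟩
    apply Subtype.ext
    show gMap EE = (G : Function.End RC)
    funext z
    obtain ⟨x, rfl⟩ := hsurj z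
    have h1 : gMap EE (φ₀.toMonoidHom x) = φ₀.toMonoidHom (extWord [a] [b] hh x) :=
      hgSpec EE x (extWord [a] [b] hh x) (φS.op_spec [a] [b] hh x)
    rw [h1, ← hGop]
    exact (φ₀.op_spec [a] [b] hh x).symm
  exact ⟨T, ⟨{ toMonoidHom := hmh, opMap := opM, compat := fun EE t => hcompat EE t },
    hmh_surj, hopM_surj⟩⟩

end KeyQuotient
section Main

open UniformSpace in
lemma variety_eqs (V : AlgVariety) : ∃ E : EqSet, ∀ R : BExt, V.mem R ↔ SatisfiesEqs R E := by
  classical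
  refine ⟨⟨fun B _ _ => {p | ∀ S : BExt, V.mem S → ∀ (φ : ExtHomWM B S.ext)
      (ψ : Completion (WM B) → S.carrier),
      ((@Continuous _ _ _ ⊥ ψ) ∧ ∀ x : WM B, ψ ↑x = φ.toMonoidHom x) → ψ p.1 = ψ p.2}⟩,
    fun R => ⟨fun hmem B _ _ p hp φ ψ hψ => hp R hmem φ ψ hψ, fun hsat => ?_⟩⟩
  by_contra hmem
  let B : Type := R.carrier ⊕ (↥R.ext.O ⊕ ↥R.ext.O)
  letI : VPAlphabet B :=
    ⟨fun c => Sum.elim (fun _ => VPKind.intern)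
      (Sum.elim (fun _ => VPKind.call) (fun _ => VPKind.ret)) c⟩
  haveI : Finite B := by infer_instance
  let r₀ : B → R.carrier := fun c => Sum.elim id (fun _ => 1) c
  let e₀ : B → B → ↥R.ext.O := fun a _ =>
    Sum.elim (fun _ => 1) (Sum.elim (fun G => G) (fun _ => 1)) a
  let φ₀ : ExtHomWM B R.ext := mkExtHom R.ext r₀ e₀
  have hsurj : Function.Surjective φ₀.toMonoidHom := by
    intro z
    exact ⟨⟨[Sum.inl z], WellMatched.intern _ rfl⟩,
      mkExtHom_m_intern R.ext r₀ e₀ (c := (Sum.inl z : B)) rfl _⟩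
  have hopsurj : ∀ G : R.ext.O, ∃ (a b : B) (hh : WellMatched ([a] ++ [b])),
      φ₀.op [a] [b] hh = G := by
    intro G
    refine ⟨Sum.inr (Sum.inl G), Sum.inr (Sum.inr G),
      WellMatched.ext _ _ [] rfl rfl WellMatched.nil, ?_⟩
    exact mkExtHom_op_elem R.ext r₀ e₀ (a := (Sum.inr (Sum.inl G) : B))
      (b := (Sum.inr (Sum.inr G) : B)) rfl rfl _
  obtain ⟨ψ₀, hψ₀c, hψ₀a⟩ := psi_exists φ₀
  let D : Set (Completion (WM B) × Completion (WM B)) := {p | ψ₀ p.1 ≠ ψ₀ p.2}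
  have hDsep : ∀ q ∈ D, ∃ (S : BExt) (φ : ExtHomWM B S.ext)
      (ψ : Completion (WM B) → S.carrier), V.mem S ∧
      ((@Continuous _ _ _ ⊥ ψ) ∧ ∀ x : WM B, ψ ↑x = φ.toMonoidHom x) ∧ ψ q.1 ≠ ψ q.2 := by
    intro q hq
    by_contra hcon
    push_neg at hcon
    exact hq (hsat B q (fun S hS φ ψ hcd => hcon S φ ψ hS hcd) φ₀ ψ₀ ⟨hψ₀c, hψ₀a⟩)
  letI : TopologicalSpace R.carrier := ⊥
  haveI : DiscreteTopology R.carrier := ⟨rfl⟩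
  have hpair₀ : Continuous (fun p : Completion (WM B) × Completion (WM B) =>
      (ψ₀ p.1, ψ₀ p.2)) :=
    Continuous.prodMk (hψ₀c.comp continuous_fst) (hψ₀c.comp continuous_snd)
  have hDclosed : IsClosed D := by
    have hDeq : D = (fun p : Completion (WM B) × Completion (WM B) => (ψ₀ p.1, ψ₀ p.2)) ⁻¹'
        {r : R.carrier × R.carrier | r.1 ≠ r.2} := rfl
    rw [hDeq]
    exact IsClosed.preimage hpair₀ (isClosed_discrete _)
  have hDcomp : IsCompact D := hDclosed.isCompact
  choose Sd φd ψd hmemd hcondd hsepd using fun q : {q // q ∈ D} => hDsep q q.2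
  let U : {q // q ∈ D} → Set (Completion (WM B) × Completion (WM B)) :=
    fun q => {p | ψd q p.1 ≠ ψd q p.2}
  have hUopen : ∀ q, IsOpen (U q) := by
    intro q
    letI : TopologicalSpace (Sd q).carrier := ⊥
    haveI : DiscreteTopology (Sd q).carrier := ⟨rfl⟩
    have hp : Continuous (fun p : Completion (WM B) × Completion (WM B) =>
        (ψd q p.1, ψd q p.2)) :=
      Continuous.prodMk ((hcondd q).1.comp continuous_fst) ((hcondd q).1.comp continuous_snd)
    have hUeq : U q = (fun p : Completion (WM B) × Completion (WM B) =>
        (ψd q p.1, ψd q p.2)) ⁻¹' {r : (Sd q).carrier × (Sd q).carrier | r.1 ≠ r.2} := rfl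
    rw [hUeq]
    exact IsOpen.preimage hp (isOpen_discrete _)
  obtain ⟨t, ht⟩ := hDcomp.elim_finite_subcover U hUopen
    (fun p hp => Set.mem_iUnion.mpr ⟨⟨p, hp⟩, hsepd ⟨p, hp⟩⟩)
  have hcomb : ∀ tt : Finset {q // q ∈ D}, ∃ (S : BExt) (φ : ExtHomWM B S.ext)
      (ψ : Completion (WM B) → S.carrier), V.mem S ∧ (@Continuous _ _ _ ⊥ ψ) ∧
      (∀ x : WM B, ψ ↑x = φ.toMonoidHom x) ∧
      ∀ u v : Completion (WM B), ψ u = ψ v → ∀ q ∈ tt, ψd q u = ψd q v := by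
    intro tt
    induction tt using Finset.induction_on with
    | empty =>
      exact ⟨{ carrier := PUnit, ext := punitExt }, trivialExtHom, fun _ => PUnit.unit,
        V.punit_mem, continuous_const, fun _ => rfl,
        fun u v _ q hq => absurd hq (Finset.notMem_empty q)⟩
    | @insert a tt hat ih =>
      obtain ⟨S, φ, ψ, hS, hc, ha, hsep⟩ := ih
      refine ⟨{ carrier := (Sd a).carrier × S.carrier, ext := prodExt (Sd a).ext S.ext },
        pairExtHom (φd a) φ, fun u => (ψd a u, ψ u),
        V.prod_closed _ _ (hmemd a) hS, ?_, ?_, ?_⟩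
      · letI : TopologicalSpace (Sd a).carrier := ⊥
        letI : TopologicalSpace S.carrier := ⊥
        haveI : DiscreteTopology (Sd a).carrier := ⟨rfl⟩
        haveI : DiscreteTopology S.carrier := ⟨rfl⟩
        have hd := DiscreteTopology.eq_bot (α := (Sd a).carrier × S.carrier)
        rw [← hd]
        exact Continuous.prodMk (hcondd a).1 hc
      · intro x
        show (ψd a ↑x, ψ ↑x) = _
        rw [(hcondd a).2 x, ha x]
        rfl
      · intro u v huv q hq
        rcases Finset.mem_insert.mp hq with rfl | hq'
        · exact congrArg Prod.fst huv
        · exact hsep u v (congrArg Prod.snd huv) q hq'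
  obtain ⟨Sb, φb, ψb, hSb, hcb, hab, hsepb⟩ := hcomb t
  have hkey : ∀ u v : Completion (WM B), ψb u = ψb v → ψ₀ u = ψ₀ v := by
    intro u v huv
    by_contra hne
    have hD : (u, v) ∈ D := hne
    obtain ⟨q, hq⟩ := Set.mem_iUnion.mp (ht hD)
    simp only [Set.mem_iUnion] at hq
    obtain ⟨hqt, hqU⟩ := hq
    exact hqU (hsepb u v huv q hqt)
  have hkeyW : ∀ x y : WM B, φb.toMonoidHom x = φb.toMonoidHom y →
      φ₀.toMonoidHom x = φ₀.toMonoidHom y := by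
    intro x y hxy
    have hxy2 := hkey ↑x ↑y (by rw [hab, hab, hxy])
    rwa [hψ₀a, hψ₀a] at hxy2
  obtain ⟨T, hquot⟩ := key_quotient R.ext φ₀ hsurj hopsurj Sb.ext φb hkeyW
  exact hmem (V.quot_closed R { carrier := T.carrier, ext := T.toExtAlgebra }
    (V.sub_closed Sb T hSb) hquot)

end Main

/-- Reiterman's theorem for `Ext`-algebras: equationally defined classes are
pseudo-varieties, and every pseudo-variety is defined by a set of profinite
equations. -/
theorem statement18 :
    (∀ E : EqSet,
      (∀ R S : BExt, SatisfiesEqs S E → IsQuotientOf R.ext S.ext → SatisfiesEqs R E) ∧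
      (∀ (S : BExt) (T : SubExt S.ext), SatisfiesEqs S E →
        SatisfiesEqs { carrier := T.carrier, ext := T.toExtAlgebra } E) ∧
      (∀ R S : BExt, SatisfiesEqs R E → SatisfiesEqs S E →
        SatisfiesEqs { carrier := R.carrier × S.carrier, ext := prodExt R.ext S.ext } E)) ∧
    (∀ V : AlgVariety, ∃ E : EqSet, ∀ R : BExt, V.mem R ↔ SatisfiesEqs R E) := by
  refine ⟨fun E => ⟨satA_quot E, satA_sub E, satA_prod E⟩, variety_eqs⟩
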